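/- Let γ = (γ₁, γ₂) be a solution of the ODE γ′ = v∘γ for a homogeneous vector field v of degree k with γ₂ never vanishing, let δ := γ₁/γ₂, P(x,y) := x v₂(x,y) − y v₁(x,y), and p(z) := P(z, 1). Then γ₂(t)^{k−1} = −δ′(t)/p(δ(t)) for all t in the domain (wherever p(δ(t)) ≠ 0). -/

import Mathlib

theorem stmt13 (k : ℕ) (hk : 2 ≤ k)
    (v₁ v₂ : ℂ → ℂ → ℂ)
    (hhom₁ : ∀ (c x y : ℂ), v₁ (c * x) (c * y) = c ^ k * v₁ x y)
    (hhom₂ : ∀ (c x y : ℂ), v₂ (c * x) (c * y) = c ^ k * v₂ x y)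
    (γ₁ γ₂ : ℝ → ℂ) (hγ₂ : ∀ t, γ₂ t ≠ 0)
    (hode₁ : ∀ t, HasDerivAt γ₁ (v₁ (γ₁ t) (γ₂ t)) t)
    (hode₂ : ∀ t, HasDerivAt γ₂ (v₂ (γ₁ t) (γ₂ t)) t)
    (p : ℂ → ℂ) (hp : ∀ z, p z = z * v₂ z 1 - v₁ z 1)
    (δ : ℝ → ℂ) (hδ : ∀ t, δ t = γ₁ t / γ₂ t)
    (t : ℝ) (hpt : p (δ t) ≠ 0) :
    γ₂ t ^ (k - 1) = -(deriv δ t) / p (δ t) := by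
  have hδe : δ = fun s => γ₁ s / γ₂ s := funext hδ
  have hd : HasDerivAt δ
      ((v₁ (γ₁ t) (γ₂ t) * γ₂ t - γ₁ t * v₂ (γ₁ t) (γ₂ t)) / γ₂ t ^ 2) t := by
    rw [hδe]
    exact (hode₁ t).div (hode₂ t) (hγ₂ t)
  have hγ₁ : γ₁ t = γ₂ t * δ t := by
    rw [hδ, mul_comm, div_mul_cancel₀ _ (hγ₂ t)]
  have h1 : v₁ (γ₁ t) (γ₂ t) = γ₂ t ^ k * v₁ (δ t) 1 := by
    rw [hγ₁, ← hhom₁ (γ₂ t) (δ t) 1, mul_one]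
  have h2 : v₂ (γ₁ t) (γ₂ t) = γ₂ t ^ k * v₂ (δ t) 1 := by
    rw [hγ₁, ← hhom₂ (γ₂ t) (δ t) 1, mul_one]
  rw [hd.deriv, h1, h2, hγ₁, hp]
  obtain ⟨m, rfl⟩ : ∃ m, k = m + 2 := ⟨k - 2, by omega⟩
  have hz := hγ₂ t
  have hpz : δ t * v₂ (δ t) 1 - v₁ (δ t) 1 ≠ 0 := by rw [← hp]; exact hpt
  field_simp
  rw [show m + 2 - 1 = m + 1 by omega]
  ring
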